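/- arXiv:1911.08300 — 9 statements merged into one kernel-verified Lean document; each statement's English description precedes it below -/
import Mathlib

section
/- For integers n, p with 2 ≤ p ≤ n-2, the integral ∫_{-1}^{1} x·(x+n-p)^{n-p-1}·(p-x)^{p-1} dx equals -(1/n)·((p-1)^p·(n-p+1)^{n-p} - (p+1)^p·(n-p-1)^{n-p}). -/
theorem stmt_0 (n p : ℕ) (hp : 2 ≤ p) (hn : p + 2 ≤ n) :
    ∫ x in (-1:ℝ)..1, x * (x + (n:ℝ) - p) ^ (n - p - 1) * ((p:ℝ) - x) ^ (p - 1)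
      = -(1 / (n:ℝ)) * (((p:ℝ) - 1) ^ p * ((n:ℝ) - p + 1) ^ (n - p)
        - ((p:ℝ) + 1) ^ p * ((n:ℝ) - p - 1) ^ (n - p)) := by
  obtain ⟨m, rfl⟩ : ∃ m, n = p + m := ⟨n - p, by omega⟩
  have hm : 2 ≤ m := by omega
  have h1 : p + m - p - 1 = m - 1 := by omega
  have h2 : p + m - p = m := by omega
  rw [h1, h2]
  have hne : ((p:ℝ) + m) ≠ 0 := by positivity
  have key : ∀ x : ℝ, HasDerivAt
      (fun x : ℝ => -(1/((p:ℝ)+m)) * ((x + (m:ℝ))^m * ((p:ℝ) - x)^p))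
      (x * (x + ((p:ℝ)+m) - p)^(m-1) * ((p:ℝ) - x)^(p-1)) x := by
    intro x
    have hd1 : HasDerivAt (fun x : ℝ => (x + (m:ℝ))^m)
        ((m:ℝ) * (x+(m:ℝ))^(m-1) * 1) x := ((hasDerivAt_id x).add_const (m:ℝ)).pow m
    have hd2 : HasDerivAt (fun x : ℝ => ((p:ℝ) - x)^p)
        ((p:ℝ) * ((p:ℝ)-x)^(p-1) * (-1)) x := ((hasDerivAt_id x).const_sub (p:ℝ)).pow p
    have hd := (hd1.mul hd2).const_mul (-(1/((p:ℝ)+m)))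
    convert hd using 1
    case e'_4 => rfl
    case e'_5 => rfl
    case e'_8 => rfl
    have e1 : (x+(m:ℝ))^m = (x+(m:ℝ))^(m-1) * (x+(m:ℝ)) := by
      rw [← pow_succ]; congr 1; omega
    have e2 : ((p:ℝ)-x)^p = ((p:ℝ)-x)^(p-1) * ((p:ℝ)-x) := by
      rw [← pow_succ]; congr 1; omega
    rw [e1, e2]
    field_simp
    ring
  have hcont : Continuous fun x : ℝ =>
      x * (x + ((p:ℝ)+m) - p)^(m-1) * ((p:ℝ) - x)^(p-1) := by continuity
  have := intervalIntegral.integral_eq_sub_of_hasDerivAt (a := (-1:ℝ)) (b := 1)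
    (fun x _ => key x) (hcont.intervalIntegrable _ _)
  push_cast at this ⊢
  rw [this]
  ring
end

section
/- The function x ↦ (x-1)/(x+1), raised to the power x, i.e. f(x) = ((x-1)/(x+1))^x = exp(x·log((x-1)/(x+1))), is strictly increasing on the open interval (1, ∞). -/
open Real

lemma key_ineq (x : ℝ) (hx : 1 < x) :
    0 < (Real.log (x - 1) - Real.log (x + 1)) + x * (1 / (x - 1) - 1 / (x + 1)) := by
  have h1 : (0:ℝ) < x - 1 := by linarith
  have h2 : (0:ℝ) < x + 1 := by linarith
  set u : ℝ := (x + 1) / (x - 1) with hu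
  have hu1 : 1 < u := by
    rw [hu, lt_div_iff₀ h1]; linarith
  have hlogpos : 0 < Real.log u := Real.log_pos hu1
  have hs := Real.self_lt_sinh_iff.mpr hlogpos
  have hupos : 0 < u := by linarith
  rw [Real.sinh_eq, Real.exp_log hupos, Real.exp_neg, Real.exp_log hupos] at hs
  have hlogu : Real.log u = Real.log (x + 1) - Real.log (x - 1) := by
    rw [hu, Real.log_div (by linarith) (by linarith)]
  rw [hlogu] at hs
  have harith : (u - u⁻¹) / 2 = x * (1 / (x - 1) - 1 / (x + 1)) := by
    rw [hu]
    field_simp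
    ring
  rw [harith] at hs
  linarith

lemma mono_aux : StrictMonoOn (fun x : ℝ => x * (Real.log (x - 1) - Real.log (x + 1))) (Set.Ioi 1) := by
  apply strictMonoOn_of_deriv_pos (convex_Ioi 1)
  · apply ContinuousOn.mul continuousOn_id
    apply ContinuousOn.sub
    · exact ContinuousOn.log (by fun_prop) (fun x hx => by
        have : (1:ℝ) < x := hx; exact ne_of_gt (by linarith))
    · exact ContinuousOn.log (by fun_prop) (fun x hx => by
        have : (1:ℝ) < x := hx; exact ne_of_gt (by linarith))
  · intro x hx
    rw [interior_Ioi] at hx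
    have hx1 : (1:ℝ) < x := hx
    have h1 : x - 1 ≠ 0 := ne_of_gt (by linarith)
    have h2 : x + 1 ≠ 0 := ne_of_gt (by linarith)
    have d1 : HasDerivAt (fun x : ℝ => Real.log (x - 1)) (1 / (x - 1)) x := by
      have := (Real.hasDerivAt_log h1).comp x ((hasDerivAt_id x).sub_const 1)
      simpa [Function.comp_def] using this
    have d2 : HasDerivAt (fun x : ℝ => Real.log (x + 1)) (1 / (x + 1)) x := by
      have := (Real.hasDerivAt_log h2).comp x ((hasDerivAt_id x).add_const 1)
      simpa [Function.comp_def] using this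
    have d : HasDerivAt (fun x : ℝ => x * (Real.log (x - 1) - Real.log (x + 1)))
        (1 * (Real.log (x - 1) - Real.log (x + 1)) + x * (1 / (x - 1) - 1 / (x + 1))) x :=
      (hasDerivAt_id x).mul (d1.sub d2)
    rw [d.deriv]
    have := key_ineq x hx1
    linarith

theorem stmt_1 :
    StrictMonoOn (fun x : ℝ => Real.exp (x * Real.log ((x - 1) / (x + 1)))) (Set.Ioi 1) := by
  intro a ha b hb hab
  have ha1 : (1:ℝ) < a := ha
  have hb1 : (1:ℝ) < b := hb
  simp only
  rw [Real.log_div (by linarith) (by linarith), Real.log_div (by linarith) (by linarith)]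
  exact Real.exp_lt_exp.mpr (mono_aux ha hb hab)
end

section
/- For all real y with 0 < y < 1, the identity log(1-y) + (y·(2-y))/(2·(1-y)) = Σ_{k=0}^{∞} ((k+1)/(2·(k+3)))·y^{k+3} holds, where the series converges. -/
theorem stmt_3 (y : ℝ) (h0 : 0 < y) (h1 : y < 1) :
    Summable (fun k : ℕ => (((k:ℝ) + 1) / (2 * ((k:ℝ) + 3))) * y ^ (k + 3)) ∧
    Real.log (1 - y) + y * (2 - y) / (2 * (1 - y))
      = ∑' k : ℕ, (((k:ℝ) + 1) / (2 * ((k:ℝ) + 3))) * y ^ (k + 3) := by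
  have hy1 : (1 : ℝ) - y ≠ 0 := by nlinarith
  have habs : |y| < 1 := by rw [abs_of_pos h0]; exact h1
  -- log series
  have hlog : HasSum (fun n : ℕ => y ^ (n + 1) / (n + 1)) (-Real.log (1 - y)) :=
    Real.hasSum_pow_div_log_of_abs_lt_one habs
  have hlog3 : HasSum (fun n : ℕ => y ^ (n + 3) / ((n : ℝ) + 3))
      (-Real.log (1 - y) - (y + y ^ 2 / 2)) := by
    have := (hasSum_nat_add_iff' (f := fun n : ℕ => y ^ (n + 1) / (n + 1)) 2).mpr hlog
    simp only [Finset.sum_range_succ, Finset.sum_range_zero] at this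
    convert this using 2 with n
    · rfl
    · push_cast; ring
    · norm_num
  -- geometric series
  have hgeo : HasSum (fun n : ℕ => (1 / 2 : ℝ) * y ^ (n + 3))
      (y ^ 3 / (2 * (1 - y))) := by
    have h := (hasSum_geometric_of_lt_one h0.le h1).mul_left (y ^ 3 / 2)
    have he : (fun n : ℕ => (1 / 2 : ℝ) * y ^ (n + 3)) = fun n : ℕ => y ^ 3 / 2 * y ^ n := by
      funext n; ring
    rw [he]
    convert h using 1
    · rfl
    field_simp
  have hsum : HasSum (fun k : ℕ => (((k:ℝ) + 1) / (2 * ((k:ℝ) + 3))) * y ^ (k + 3))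
      (y ^ 3 / (2 * (1 - y)) - (-Real.log (1 - y) - (y + y ^ 2 / 2))) := by
    have he : (fun k : ℕ => (((k:ℝ) + 1) / (2 * ((k:ℝ) + 3))) * y ^ (k + 3))
        = fun k : ℕ => (1 / 2 : ℝ) * y ^ (k + 3) - y ^ (k + 3) / ((k : ℝ) + 3) := by
      funext k
      have hk : (k : ℝ) + 3 ≠ 0 := by positivity
      field_simp
      ring
    rw [he]
    exact hgeo.sub hlog3
  refine ⟨hsum.summable, ?_⟩
  rw [hsum.tsum_eq]
  field_simp
  ring
end

section
/- Let n, p be integers with 2 ≤ p ≤ n-2 and define I(n,p) = ∫_{-1}^{1} x·(x+n-p)^{n-p-1}·(p-x)^{p-1} dx. Then I(n,p) = 0 if and only if 2p = n; moreover I(n,p) > 0 if 2p < n and I(n,p) < 0 if 2p > n. -/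
open Real MeasureTheory intervalIntegral Set

/-- Monotonicity of h(t) = (t-1)(log(t+x)-log(t-x)) on [2,∞). -/
lemma aux_hmono {x : ℝ} (hx : 0 < x) (hx1 : x ≤ 1) :
    StrictMonoOn (fun t => (t - 1) * (Real.log (t + x) - Real.log (t - x))) (Set.Ici (2:ℝ)) := by
  apply strictMonoOn_of_deriv_pos (convex_Ici 2)
  · apply ContinuousOn.mul
    · fun_prop
    · apply ContinuousOn.sub
      · apply ContinuousOn.log (by fun_prop)
        intro t ht
        have : (2:ℝ) ≤ t := ht
        positivity
      · apply ContinuousOn.log (by fun_prop)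
        intro t ht
        have h2 : (2:ℝ) ≤ t := ht
        nlinarith
  · intro t ht
    rw [interior_Ici] at ht
    have ht2 : (2:ℝ) < t := ht
    have htx : 0 < t + x := by linarith
    have htx' : 0 < t - x := by linarith
    have hd1 : HasDerivAt (fun t : ℝ => Real.log (t + x)) (1 / (t + x)) t := by
      simpa using (((hasDerivAt_id t).add_const x).log (ne_of_gt htx))
    have hd2 : HasDerivAt (fun t : ℝ => Real.log (t - x)) (1 / (t - x)) t := by
      simpa using (((hasDerivAt_id t).sub_const x).log (ne_of_gt htx'))
    have hd : HasDerivAt (fun t : ℝ => (t - 1) * (Real.log (t + x) - Real.log (t - x)))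
        (1 * (Real.log (t + x) - Real.log (t - x)) + (t - 1) * (1 / (t + x) - 1 / (t - x))) t :=
      (((hasDerivAt_id t).sub_const 1)).mul (hd1.sub hd2)
    rw [hd.deriv]
    -- log lower bound
    have hne : (t - x) / (t + x) ≠ 1 := by
      apply ne_of_lt
      rw [div_lt_one htx]; linarith
    have hlog := Real.log_lt_sub_one_of_pos (div_pos htx' htx) hne
    rw [Real.log_div (ne_of_gt htx') (ne_of_gt htx)] at hlog
    -- hlog : log (t-x) - log (t+x) < (t-x)/(t+x) - 1
    have h1 : Real.log (t + x) - Real.log (t - x) > 1 - (t - x) / (t + x) := by linarith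
    have h2 : 1 - (t - x) / (t + x) = 2 * x / (t + x) := by field_simp; ring
    have h3 : (t - 1) * (1 / (t + x) - 1 / (t - x)) = -(2 * x * (t - 1) / ((t - x) * (t + x))) := by
      field_simp; ring
    have h4 : 2 * x * (t - 1) / ((t - x) * (t + x)) ≤ 2 * x / (t + x) := by
      rw [div_le_div_iff₀ (by positivity) htx]
      nlinarith [mul_nonneg (mul_nonneg (by linarith : (0:ℝ) ≤ 2 * x) htx.le)
        (by linarith : (0:ℝ) ≤ 1 - x)]
    rw [h3]
    rw [h2] at h1
    linarith

lemma aux_pow_lt (p q : ℕ) (hp : 2 ≤ p) (hpq : p < q) {x : ℝ} (hx : 0 < x) (hx1 : x ≤ 1) :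
    ((q:ℝ) - x) ^ (q - 1) * ((p:ℝ) + x) ^ (p - 1)
      < ((x + (q:ℝ))) ^ (q - 1) * ((p:ℝ) - x) ^ (p - 1) := by
  have hp2 : (2:ℝ) ≤ (p:ℝ) := by exact_mod_cast hp
  have hq2 : (2:ℝ) ≤ (q:ℝ) := by exact_mod_cast hp.trans hpq.le
  have hpx : 0 < (p:ℝ) - x := by linarith
  have hpx' : 0 < (p:ℝ) + x := by linarith
  have hqx : 0 < (q:ℝ) - x := by linarith
  have hqx' : 0 < x + (q:ℝ) := by linarith
  have hm := aux_hmono hx hx1 (show (p:ℝ) ∈ Set.Ici (2:ℝ) from hp2)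
    (show (q:ℝ) ∈ Set.Ici (2:ℝ) from hq2) (by exact_mod_cast hpq)
  simp only at hm
  rw [← Real.log_lt_log_iff (by positivity) (by positivity), Real.log_mul (by positivity)
    (by positivity), Real.log_mul (by positivity) (by positivity), Real.log_pow, Real.log_pow,
    Real.log_pow, Real.log_pow]
  have hc1 : ((p - 1 : ℕ) : ℝ) = (p:ℝ) - 1 := by
    push_cast [Nat.cast_sub (by omega : 1 ≤ p)]; ring
  have hc2 : ((q - 1 : ℕ) : ℝ) = (q:ℝ) - 1 := by
    push_cast [Nat.cast_sub (by omega : 1 ≤ q)]; ring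
  rw [hc1, hc2]
  have e : x + (q:ℝ) = (q:ℝ) + x := by ring
  rw [e]
  nlinarith [hm]

lemma aux_split (f : ℝ → ℝ) (hf : Continuous f) :
    (∫ x in (-1:ℝ)..1, f x) = ∫ x in (0:ℝ)..1, (f x + f (-x)) := by
  have h1 : (∫ x in (0:ℝ)..1, f (-x)) = ∫ x in (-1:ℝ)..0, f x := by
    simpa using intervalIntegral.integral_comp_neg (a := (0:ℝ)) (b := 1) f
  rw [intervalIntegral.integral_add (hf.intervalIntegrable _ _)
    ((by fun_prop : Continuous fun x : ℝ => f (-x)).intervalIntegrable _ _), h1,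
    ← intervalIntegral.integral_add_adjacent_intervals (hf.intervalIntegrable (-1) 0)
      (hf.intervalIntegrable 0 1)]
  ring

lemma aux_anti (p q : ℕ) :
    (∫ x in (-1:ℝ)..1, x * (x + (q:ℝ)) ^ (q - 1) * ((p:ℝ) - x) ^ (p - 1))
      = - ∫ x in (-1:ℝ)..1, x * (x + (p:ℝ)) ^ (p - 1) * ((q:ℝ) - x) ^ (q - 1) := by
  have h : (∫ x in (-1:ℝ)..1, (fun y => y * (y + (q:ℝ)) ^ (q - 1) * ((p:ℝ) - y) ^ (p - 1)) (-x))
      = ∫ x in (-1:ℝ)..1, x * (x + (q:ℝ)) ^ (q - 1) * ((p:ℝ) - x) ^ (p - 1) := by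
    simpa using intervalIntegral.integral_comp_neg (a := (-1:ℝ)) (b := 1)
      (fun y => y * (y + (q:ℝ)) ^ (q - 1) * ((p:ℝ) - y) ^ (p - 1))
  rw [← h]
  rw [← intervalIntegral.integral_neg]
  apply intervalIntegral.integral_congr
  intro x _
  simp only
  have e1 : -x + (q:ℝ) = (q:ℝ) - x := by ring
  have e2 : (p:ℝ) - -x = x + (p:ℝ) := by ring
  rw [e1, e2]
  ring

lemma aux_pos (p q : ℕ) (hp : 2 ≤ p) (hpq : p < q) :
    0 < ∫ x in (-1:ℝ)..1, x * (x + (q:ℝ)) ^ (q - 1) * ((p:ℝ) - x) ^ (p - 1) := by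
  rw [aux_split _ (by fun_prop)]
  apply intervalIntegral.intervalIntegral_pos_of_pos_on
  · apply Continuous.intervalIntegrable; fun_prop
  · intro x hx
    obtain ⟨hx0, hx1⟩ := hx
    have e1 : -x + (q:ℝ) = (q:ℝ) - x := by ring
    have e2 : (p:ℝ) - -x = (p:ℝ) + x := by ring
    rw [e1, e2]
    have key := aux_pow_lt p q hp hpq hx0 hx1.le
    nlinarith [key, hx0]
  · norm_num

theorem stmt_4 (n p : ℕ) (hp : 2 ≤ p) (hn : p + 2 ≤ n) :
    ((∫ x in (-1:ℝ)..1, x * (x + (n:ℝ) - p) ^ (n - p - 1) * ((p:ℝ) - x) ^ (p - 1)) = 0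
      ↔ 2 * p = n) ∧
    (2 * p < n →
      0 < ∫ x in (-1:ℝ)..1, x * (x + (n:ℝ) - p) ^ (n - p - 1) * ((p:ℝ) - x) ^ (p - 1)) ∧
    (n < 2 * p →
      (∫ x in (-1:ℝ)..1, x * (x + (n:ℝ) - p) ^ (n - p - 1) * ((p:ℝ) - x) ^ (p - 1)) < 0) := by
  obtain ⟨q, hqdef⟩ : ∃ q, q = n - p := ⟨n - p, rfl⟩
  have hq2 : 2 ≤ q := by omega
  have hcast : ((q:ℕ):ℝ) = (n:ℝ) - (p:ℝ) := by
    rw [hqdef, Nat.cast_sub (by omega : p ≤ n)]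
  have hrw : ∀ x : ℝ, x + (n:ℝ) - (p:ℝ) = x + (q:ℝ) := by
    intro x; rw [hcast]; ring
  have hexp : n - p - 1 = q - 1 := by omega
  simp only [hrw, hexp]
  have hneg : q < p → (∫ x in (-1:ℝ)..1, x * (x + (q:ℝ)) ^ (q - 1) * ((p:ℝ) - x) ^ (p - 1)) < 0 := by
    intro h
    rw [aux_anti p q]
    have := aux_pos q p hq2 h
    linarith
  have hzero : p = q → (∫ x in (-1:ℝ)..1, x * (x + (q:ℝ)) ^ (q - 1) * ((p:ℝ) - x) ^ (p - 1)) = 0 := by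
    intro h
    subst h
    have := aux_anti p p
    linarith
  refine ⟨⟨fun h0 => ?_, fun h => hzero (by omega)⟩, fun h => aux_pos p q hp (by omega),
    fun h => hneg (by omega)⟩
  by_contra hne
  rcases lt_trichotomy (2 * p) n with h | h | h
  · have := aux_pos p q hp (by omega); linarith
  · exact hne h
  · have := hneg (by omega); linarith
end

section
/- For integers p, n with 2 ≤ p and 2p < n ≤ 2p + (n-2p) (i.e. 2 ≤ p < n/2 and p ≤ n-2), one has (p-1)^p·(n-p+1)^{n-p} < (p+1)^p·(n-p-1)^{n-p}. -/
lemma binom (j a : ℕ) :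
    a^(j+2) + 2*(j+2)*a^(j+1) + 2*(j+2)*(j+1)*a^j ≤ (a+2)^(j+2) := by
  induction j with
  | zero =>
    have h1 : (a+2)^(0+2) = a*a + 4*a + 4 := by ring
    have h2 : a^(0+2) = a*a := by ring
    have h3 : a^(0+1) = a := by ring
    have h4 : a^0 = 1 := by ring
    rw [h1, h2, h3, h4]
  | succ j ih =>
    have h1 : (a+2)^(j+1+2) = (a+2) * (a+2)^(j+2) := by ring
    have h2 : (a+2) * (a^(j+2) + 2*(j+2)*a^(j+1) + 2*(j+2)*(j+1)*a^j)
        ≤ (a+2) * (a+2)^(j+2) := Nat.mul_le_mul_left _ ih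
    have e1 : a^(j+1) = a * a^j := by ring
    have e2 : a^(j+2) = a * (a * a^j) := by ring
    have e3 : a^(j+1+1) = a * (a * a^j) := by ring
    have e4 : a^(j+1+2) = a * (a * (a * a^j)) := by ring
    rw [h1]
    refine le_trans ?_ h2
    have hkey : a^(j+1+2) + 2*(j+1+2)*a^(j+1+1) + 2*(j+1+2)*(j+1+1)*a^(j+1)
        + 4*(j+2)*(j+1)*a^j
        = (a+2) * (a^(j+2) + 2*(j+2)*a^(j+1) + 2*(j+2)*(j+1)*a^j) := by ring
    linarith [Nat.zero_le (4*(j+2)*(j+1)*a^j)]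

lemma key (j : ℕ) :
    (j+4)^(j+3) * (j+1)^(j+2) < (j+2)^(j+3) * (j+3)^(j+2) := by
  set a := (j+4)*(j+1) with ha
  have hb := binom j a
  have hpos : 0 < a^j := Nat.pow_pos (by positivity)
  have hmain : a^(j+2)*(j+4) < (a+2)^(j+2)*(j+2) := by
    have h3 : (a^(j+2) + 2*(j+2)*a^(j+1) + 2*(j+2)*(j+1)*a^j) * (j+2)
        ≤ (a+2)^(j+2)*(j+2) := Nat.mul_le_mul_right _ hb
    have e1 : a^(j+1) = a * a^j := by ring
    have e2 : a^(j+2) = a * a * a^j := by ring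
    have hscal : 2*a*a < 2*(j+2)*(j+2)*a + 2*(j+2)*(j+2)*(j+1) := by
      rw [ha]; nlinarith
    calc a^(j+2)*(j+4) = (a*a*a^j)*(j+4) := by rw [e2]
      _ < (a^(j+2) + 2*(j+2)*a^(j+1) + 2*(j+2)*(j+1)*a^j) * (j+2) := by
          rw [e1, e2]; nlinarith [Nat.mul_lt_mul_of_lt_of_le hscal (le_refl (a^j)) hpos]
      _ ≤ (a+2)^(j+2)*(j+2) := h3
  have e4 : a + 2 = (j+2)*(j+3) := by rw [ha]; ring
  calc (j+4)^(j+3) * (j+1)^(j+2) = a^(j+2)*(j+4) := by rw [ha, mul_pow]; ring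
    _ < (a+2)^(j+2)*(j+2) := hmain
    _ = (j+2)^(j+3) * (j+3)^(j+2) := by rw [e4, mul_pow]; ring

lemma main (p q : ℕ) (hp : 2 ≤ p) (hq : p < q) :
    (p-1)^p * (q+1)^q < (p+1)^p * (q-1)^q := by
  induction q, hq using Nat.le_induction with
  | base =>
    obtain ⟨j, rfl⟩ : ∃ j, p = j + 2 := ⟨p - 2, by omega⟩
    have := key j
    simpa [show j + 2 + 1 - 1 = j + 2 by omega, show j + 2 - 1 = j + 1 by omega,
      show j + 2 + 1 + 1 = j + 4 by omega, show j + 2 + 1 = j + 3 by omega,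
      Nat.mul_comm] using this
  | succ q hq ih =>
    obtain ⟨j, rfl⟩ : ∃ j, q = j + 2 := ⟨q - 2, by omega⟩
    have hkey := key j
    have hpos : 0 < (p-1)^p := Nat.pow_pos (by omega)
    apply Nat.lt_of_mul_lt_mul_right (a := (j+1)^(j+2))
    calc (p-1)^p * (j+2+1+1)^(j+2+1) * (j+1)^(j+2)
        = (p-1)^p * ((j+4)^(j+3) * (j+1)^(j+2)) := by ring_nf
      _ < (p-1)^p * ((j+2)^(j+3) * (j+3)^(j+2)) :=
          mul_lt_mul_of_pos_left hkey hpos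
      _ = (j+2)^(j+3) * ((p-1)^p * (j+2+1)^(j+2)) := by ring_nf
      _ < (j+2)^(j+3) * ((p+1)^p * (j+2-1)^(j+2)) :=
          mul_lt_mul_of_pos_left ih
            (Nat.pow_pos (by omega))
      _ = (p+1)^p * (j+2+1-1)^(j+2+1) * (j+1)^(j+2) := by
          simp only [show j+2-1 = j+1 by omega, show j+2+1-1 = j+2 by omega]; ring

theorem stmt_5 (n p : ℕ) (hp : 2 ≤ p) (hn : p + 2 ≤ n) (h2p : 2 * p < n) :
    (p - 1) ^ p * (n - p + 1) ^ (n - p) < (p + 1) ^ p * (n - p - 1) ^ (n - p) := by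
  exact main p (n - p) hp (by omega)
end

section
/- For integers k ≥ 3 and l ≥ 2, the double integral I(k,l) = ∫_{x=0}^{k} ∫_{y=0}^{k+l-x} (x-(k-1))·x^{k-1}·y^{l-1} dy dx is strictly negative. -/
open intervalIntegral Finset

lemma betaInt (c : ℝ) : ∀ (j m : ℕ), (∫ x in (0:ℝ)..c, x ^ m * (c - x) ^ j)
    = c ^ (m + j + 1) * ((m.factorial : ℝ) * (j.factorial : ℝ)) / ((m + j + 1).factorial : ℝ) := by
  intro j
  induction j with
  | zero =>
    intro m
    have hf : ((m + 0 + 1).factorial : ℝ) = ((m : ℝ) + 1) * (m.factorial : ℝ) := by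
      rw [show m + 0 + 1 = m + 1 by omega, Nat.factorial_succ]; push_cast; ring
    have hm : (m.factorial : ℝ) ≠ 0 := Nat.cast_ne_zero.mpr (Nat.factorial_ne_zero m)
    simp only [pow_zero, mul_one, integral_pow, hf]
    rw [show m + 0 + 1 = m + 1 by omega]
    rw [zero_pow (by omega : m + 1 ≠ 0)]
    field_simp
    ring
  | succ j ih =>
    intro m
    have hu : ∀ x ∈ Set.uIcc (0:ℝ) c,
        HasDerivAt (fun y : ℝ => (c - y) ^ (j+1)) (-((j:ℝ)+1) * (c - x) ^ j) x := by
      intro x _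
      have h := ((hasDerivAt_id x).const_sub c).pow (j+1)
      refine h.congr_deriv ?_
      simp only [id_eq, Nat.add_sub_cancel]
      push_cast
      ring
    have hv : ∀ x ∈ Set.uIcc (0:ℝ) c,
        HasDerivAt (fun y : ℝ => y ^ (m+1) / ((m:ℝ)+1)) (x ^ m) x := by
      intro x _
      have h := (hasDerivAt_pow (m+1) x).div_const ((m:ℝ)+1)
      refine h.congr_deriv ?_
      have hm : ((m:ℝ)+1) ≠ 0 := by positivity
      field_simp
      simp
    have hiu : IntervalIntegrable (fun x : ℝ => -((j:ℝ)+1) * (c - x) ^ j)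
        MeasureTheory.volume 0 c :=
      ((continuous_const.mul ((continuous_const.sub continuous_id).pow j))).intervalIntegrable 0 c
    have hiv : IntervalIntegrable (fun x : ℝ => x ^ m) MeasureTheory.volume 0 c :=
      (continuous_pow m).intervalIntegrable 0 c
    have hparts := intervalIntegral.integral_mul_deriv_eq_deriv_mul hu hv hiu hiv
    have hcomm : (∫ x in (0:ℝ)..c, x ^ m * (c - x) ^ (j+1))
        = ∫ x in (0:ℝ)..c, (c - x) ^ (j+1) * x ^ m := by
      simp [mul_comm]
    rw [hcomm, hparts]
    have hre : ∀ x : ℝ, -((j:ℝ)+1) * (c - x) ^ j * (x ^ (m+1) / ((m:ℝ)+1))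
        = (-((j:ℝ)+1) / ((m:ℝ)+1)) * (x ^ (m+1) * (c - x) ^ j) := by
      intro x; ring
    simp only [hre]
    rw [intervalIntegral.integral_const_mul, ih (m+1)]
    have e1 : m + 1 + j + 1 = m + j + 2 := by omega
    have e2 : m + (j + 1) + 1 = m + j + 2 := by omega
    rw [e1, e2]
    have hf1 : ((m+1).factorial : ℝ) = ((m:ℝ)+1) * (m.factorial : ℝ) := by
      rw [Nat.factorial_succ]; push_cast; ring
    have hf2 : ((j+1).factorial : ℝ) = ((j:ℝ)+1) * (j.factorial : ℝ) := by
      rw [Nat.factorial_succ]; push_cast; ring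
    rw [hf1, hf2]
    have h1 : ((m:ℝ)+1) ≠ 0 := by positivity
    have h2 : ((m+j+2).factorial : ℝ) ≠ 0 := Nat.cast_ne_zero.mpr (Nat.factorial_ne_zero _)
    simp only [sub_zero, zero_pow (by omega : m + 1 ≠ 0)]
    field_simp
    ring

noncomputable def TT (a b j : ℕ) : ℝ :=
  (((a:ℝ)+3) ^ (a + 3 + j + 1) * (((a+3).factorial : ℝ) * (j.factorial : ℝ)) / (((a + 3 + j + 1).factorial : ℝ))
    - ((a:ℝ)+2) * (((a:ℝ)+3) ^ (a + 2 + j + 1) * (((a+2).factorial : ℝ) * (j.factorial : ℝ)) / (((a + 2 + j + 1).factorial : ℝ))))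
  * (((b:ℝ)+2) ^ (b + 2 - j) * (((b+2).choose j : ℕ) : ℝ))

lemma TT_eq (a b j : ℕ) : TT a b j =
    (((a:ℝ)+3) ^ (a + 2 + j + 1) * ((a+2).factorial : ℝ) * (j.factorial : ℝ)) * (1 - ((a:ℝ)+2) * (j:ℝ))
      / ((((a:ℝ) + (j:ℝ) + 4)) * (((a + 2 + j + 1).factorial : ℝ)))
    * (((b:ℝ)+2) ^ (b + 2 - j) * (((b+2).choose j : ℕ) : ℝ)) := by
  unfold TT
  have G1 : (((a + 3 + j + 1).factorial : ℕ) : ℝ)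
      = ((a:ℝ) + (j:ℝ) + 4) * (((a + 2 + j + 1).factorial : ℕ) : ℝ) := by
    rw [show a + 3 + j + 1 = (a + 2 + j + 1) + 1 by omega, Nat.factorial_succ]
    push_cast; ring
  have G2 : (((a + 3).factorial : ℕ) : ℝ) = ((a:ℝ) + 3) * (((a + 2).factorial : ℕ) : ℝ) := by
    rw [show a + 3 = (a + 2) + 1 from rfl, Nat.factorial_succ]
    push_cast; ring
  rw [G1, G2, show a + 3 + j + 1 = (a + 2 + j + 1) + 1 by omega, pow_succ]
  have h1 : (((a + 2 + j + 1).factorial : ℝ)) ≠ 0 := Nat.cast_ne_zero.mpr (Nat.factorial_ne_zero _)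
  have h3 : (((a + 2).factorial : ℝ)) ≠ 0 := Nat.cast_ne_zero.mpr (Nat.factorial_ne_zero _)
  have h2 : ((a:ℝ) + (j:ℝ) + 4) ≠ 0 := by positivity
  push_cast
  field_simp
  ring

lemma TT_nonpos (a b j : ℕ) (hj : 1 ≤ j) : TT a b j ≤ 0 := by
  rw [TT_eq]
  apply mul_nonpos_of_nonpos_of_nonneg
  · apply div_nonpos_iff.mpr
    refine Or.inr ⟨?_, by positivity⟩
    apply mul_nonpos_of_nonneg_of_nonpos (by positivity)
    have hj' : (1:ℝ) ≤ (j:ℝ) := by exact_mod_cast hj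
    have ha : (0:ℝ) ≤ (a:ℝ) := Nat.cast_nonneg a
    nlinarith
  · positivity

lemma choose_two_cast (b : ℕ) : (((b+2).choose 2 : ℕ) : ℝ) = ((b:ℝ)+1) * ((b:ℝ)+2) / 2 := by
  have h : (b+2).choose 2 * 2 = (b+2) * (b+1) := by
    induction b with
    | zero => rfl
    | succ n ihn =>
      have h2 : (n+3).choose 2 = (n+2).choose 1 + (n+2).choose 2 := rfl
      rw [show n+1+2 = n+3 from rfl, h2, Nat.choose_one_right, Nat.add_mul, ihn]
      ring
  have h' : (((b+2).choose 2 : ℕ) : ℝ) * 2 = ((b:ℝ)+2) * ((b:ℝ)+1) := by exact_mod_cast h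
  linarith

section TTvals
variable (a b : ℕ)

private lemma F3 : (((a+3).factorial : ℕ) : ℝ) = ((a:ℝ)+3) * ((a+2).factorial : ℝ) := by
  rw [show a+3 = (a+2)+1 from rfl, Nat.factorial_succ]; push_cast; ring
private lemma F4 : (((a+4).factorial : ℕ) : ℝ) = ((a:ℝ)+4) * ((a+3).factorial : ℝ) := by
  rw [show a+4 = (a+3)+1 from rfl, Nat.factorial_succ]; push_cast; ring
private lemma F5 : (((a+5).factorial : ℕ) : ℝ) = ((a:ℝ)+5) * ((a+4).factorial : ℝ) := by
  rw [show a+5 = (a+4)+1 from rfl, Nat.factorial_succ]; push_cast; ring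
private lemma F6 : (((a+6).factorial : ℕ) : ℝ) = ((a:ℝ)+6) * ((a+5).factorial : ℝ) := by
  rw [show a+6 = (a+5)+1 from rfl, Nat.factorial_succ]; push_cast; ring

lemma TT0 : TT a b 0 =
    ((((a:ℝ)+3)^(a+3) * ((b:ℝ)+2)^b) * (((b:ℝ)+2)*((b:ℝ)+2) * (((a:ℝ)+5)*((a:ℝ)+6))))
    / (((a:ℝ)+3)*(((a:ℝ)+4)*(((a:ℝ)+5)*((a:ℝ)+6)))) := by
  unfold TT
  rw [show a+3+0+1 = a+4 by omega, show a+2+0+1 = a+3 by omega,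
    show b+2-0 = b+1+1 by omega]
  rw [F4, F3, Nat.choose_zero_right]
  rw [show ((a:ℝ)+3)^(a+4) = ((a:ℝ)+3)^(a+3) * ((a:ℝ)+3) by rw [show a+4 = (a+3)+1 from rfl, pow_succ]]
  rw [pow_succ, pow_succ]
  have h3 : (((a + 2).factorial : ℝ)) ≠ 0 := Nat.cast_ne_zero.mpr (Nat.factorial_ne_zero _)
  have hx : (0:ℝ) ≤ (a:ℝ) := Nat.cast_nonneg a
  have n1 : ((a:ℝ)+3) ≠ 0 := by positivity
  have n2 : ((a:ℝ)+4) ≠ 0 := by positivity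
  have n3 : ((a:ℝ)+5) ≠ 0 := by positivity
  have n4 : ((a:ℝ)+6) ≠ 0 := by positivity
  simp only [Nat.factorial_zero, Nat.cast_one, Nat.cast_ofNat]
  field_simp
  ring

lemma TT1 : TT a b 1 =
    ((((a:ℝ)+3)^(a+3) * ((b:ℝ)+2)^b) * (-(((a:ℝ)+3) * (((b:ℝ)+2)*((b:ℝ)+2)) * ((a:ℝ)+1) * ((a:ℝ)+6))))
    / (((a:ℝ)+3)*(((a:ℝ)+4)*(((a:ℝ)+5)*((a:ℝ)+6)))) := by
  unfold TT
  rw [show a+3+1+1 = a+5 by omega, show a+2+1+1 = a+4 by omega,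
    show b+2-1 = b+1 by omega]
  rw [F5, F4, F3, Nat.choose_one_right]
  rw [show ((a:ℝ)+3)^(a+5) = ((a:ℝ)+3)^(a+3) * ((a:ℝ)+3) * ((a:ℝ)+3) by
    rw [show a+5 = ((a+3)+1)+1 from rfl, pow_succ, pow_succ]]
  rw [show ((a:ℝ)+3)^(a+4) = ((a:ℝ)+3)^(a+3) * ((a:ℝ)+3) by rw [show a+4 = (a+3)+1 from rfl, pow_succ]]
  rw [pow_succ]
  have h3 : (((a + 2).factorial : ℝ)) ≠ 0 := Nat.cast_ne_zero.mpr (Nat.factorial_ne_zero _)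
  have hx : (0:ℝ) ≤ (a:ℝ) := Nat.cast_nonneg a
  have n1 : ((a:ℝ)+3) ≠ 0 := by positivity
  have n2 : ((a:ℝ)+4) ≠ 0 := by positivity
  have n3 : ((a:ℝ)+5) ≠ 0 := by positivity
  have n4 : ((a:ℝ)+6) ≠ 0 := by positivity
  simp only [Nat.factorial_one, Nat.cast_one]
  push_cast
  field_simp
  ring

lemma TT2 : TT a b 2 =
    ((((a:ℝ)+3)^(a+3) * ((b:ℝ)+2)^b) * (-(((a:ℝ)+3)*((a:ℝ)+3) * (((b:ℝ)+1)*((b:ℝ)+2)) * (2*(a:ℝ)+3))))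
    / (((a:ℝ)+3)*(((a:ℝ)+4)*(((a:ℝ)+5)*((a:ℝ)+6)))) := by
  unfold TT
  rw [show a+3+2+1 = a+6 by omega, show a+2+2+1 = a+5 by omega,
    show b+2-2 = b by omega]
  rw [F6, F5, F4, F3, choose_two_cast]
  rw [show ((a:ℝ)+3)^(a+6) = ((a:ℝ)+3)^(a+3) * ((a:ℝ)+3) * ((a:ℝ)+3) * ((a:ℝ)+3) by
    rw [show a+6 = (((a+3)+1)+1)+1 from rfl, pow_succ, pow_succ, pow_succ]]
  rw [show ((a:ℝ)+3)^(a+5) = ((a:ℝ)+3)^(a+3) * ((a:ℝ)+3) * ((a:ℝ)+3) by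
    rw [show a+5 = ((a+3)+1)+1 from rfl, pow_succ, pow_succ]]
  have h3 : (((a + 2).factorial : ℝ)) ≠ 0 := Nat.cast_ne_zero.mpr (Nat.factorial_ne_zero _)
  have hx : (0:ℝ) ≤ (a:ℝ) := Nat.cast_nonneg a
  have n1 : ((a:ℝ)+3) ≠ 0 := by positivity
  have n2 : ((a:ℝ)+4) ≠ 0 := by positivity
  have n3 : ((a:ℝ)+5) ≠ 0 := by positivity
  have n4 : ((a:ℝ)+6) ≠ 0 := by positivity
  simp only [show ((2:ℕ).factorial) = 2 from rfl, Nat.cast_ofNat]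
  field_simp
  ring

lemma TT_sum3 : TT a b 0 + TT a b 1 + TT a b 2 < 0 := by
  rw [TT0, TT1, TT2, ← add_div, ← add_div]
  apply div_neg_of_neg_of_pos
  · have hx : (0:ℝ) ≤ (a:ℝ) := Nat.cast_nonneg a
    have hy : (0:ℝ) ≤ (b:ℝ) := Nat.cast_nonneg b
    have hP : (0:ℝ) < ((a:ℝ)+3)^(a+3) * ((b:ℝ)+2)^b := by positivity
    have hE : (((b:ℝ)+2)*((b:ℝ)+2) * (((a:ℝ)+5)*((a:ℝ)+6)))
        + (-(((a:ℝ)+3) * (((b:ℝ)+2)*((b:ℝ)+2)) * ((a:ℝ)+1) * ((a:ℝ)+6)))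
        + (-(((a:ℝ)+3)*((a:ℝ)+3) * (((b:ℝ)+1)*((b:ℝ)+2)) * (2*(a:ℝ)+3))) < 0 := by
      nlinarith [mul_nonneg hx hy, mul_nonneg (mul_nonneg hx hx) hy, sq_nonneg ((a:ℝ)),
        mul_nonneg (mul_nonneg hx hx) hx, mul_nonneg (mul_nonneg (mul_nonneg hx hx) hx) hy,
        mul_nonneg hx (mul_nonneg hy hy), mul_nonneg (mul_nonneg hx hx) (mul_nonneg hy hy)]
    nlinarith [hE, hP, mul_pos hP (neg_pos.mpr hE)]
  · have hx : (0:ℝ) ≤ (a:ℝ) := Nat.cast_nonneg a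
    positivity

end TTvals

lemma sum_TT_neg (a b : ℕ) : ∑ j ∈ Finset.range (b+3), TT a b j < 0 := by
  have hsplit : ∑ j ∈ Finset.range (b+3), TT a b j
      = (∑ j ∈ Finset.range 3, TT a b j) + ∑ j ∈ Finset.Ico 3 (b+3), TT a b j := by
    rw [Finset.range_eq_Ico, ← Finset.sum_Ico_consecutive _ (Nat.zero_le 3) (by omega : 3 ≤ b+3),
      ← Finset.range_eq_Ico]
  rw [hsplit]
  have h1 : ∑ j ∈ Finset.range 3, TT a b j < 0 := by
    rw [Finset.sum_range_succ, Finset.sum_range_succ, Finset.sum_range_one]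
    exact TT_sum3 a b
  have h2 : ∑ j ∈ Finset.Ico 3 (b+3), TT a b j ≤ 0 :=
    Finset.sum_nonpos fun j hj => TT_nonpos a b j (by have := (Finset.mem_Ico.mp hj).1; omega)
  linarith

lemma outer_neg (a b : ℕ) :
    (∫ x in (0:ℝ)..((a:ℝ)+3),
      (x - ((a:ℝ)+2)) * x ^ (a+2) * ((a:ℝ)+3+((b:ℝ)+2)-x) ^ (b+2)) < 0 := by
  have hexp : ∀ x : ℝ, (x - ((a:ℝ)+2)) * x ^ (a+2) * ((a:ℝ)+3+((b:ℝ)+2)-x) ^ (b+2)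
      = ∑ j ∈ Finset.range (b+3),
        (x - ((a:ℝ)+2)) * x ^ (a+2) * ((((a:ℝ)+3-x)) ^ j * ((b:ℝ)+2) ^ (b+2-j)
          * (((b+2).choose j : ℕ) : ℝ)) := by
    intro x
    rw [show (a:ℝ)+3+((b:ℝ)+2)-x = (((a:ℝ)+3-x)) + (((b:ℝ)+2)) by ring, add_pow,
      Finset.mul_sum]
  have hrw : (∫ x in (0:ℝ)..((a:ℝ)+3),
      (x - ((a:ℝ)+2)) * x ^ (a+2) * ((a:ℝ)+3+((b:ℝ)+2)-x) ^ (b+2))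
      = ∑ j ∈ Finset.range (b+3), ∫ x in (0:ℝ)..((a:ℝ)+3),
        (x - ((a:ℝ)+2)) * x ^ (a+2) * ((((a:ℝ)+3-x)) ^ j * ((b:ℝ)+2) ^ (b+2-j)
          * (((b+2).choose j : ℕ) : ℝ)) := by
    rw [intervalIntegral.integral_congr (g := fun x => ∑ j ∈ Finset.range (b+3),
        (x - ((a:ℝ)+2)) * x ^ (a+2) * ((((a:ℝ)+3-x)) ^ j * ((b:ℝ)+2) ^ (b+2-j)
          * (((b+2).choose j : ℕ) : ℝ))) (fun x _ => hexp x)]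
    apply intervalIntegral.integral_finset_sum
    intro j _
    apply Continuous.intervalIntegrable
    fun_prop
  rw [hrw]
  have hterm : ∀ j ∈ Finset.range (b+3), (∫ x in (0:ℝ)..((a:ℝ)+3),
      (x - ((a:ℝ)+2)) * x ^ (a+2) * ((((a:ℝ)+3-x)) ^ j * ((b:ℝ)+2) ^ (b+2-j)
        * (((b+2).choose j : ℕ) : ℝ))) = TT a b j := by
    intro j _
    have hfe : ∀ x : ℝ, (x - ((a:ℝ)+2)) * x ^ (a+2) * ((((a:ℝ)+3-x)) ^ j * ((b:ℝ)+2) ^ (b+2-j)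
        * (((b+2).choose j : ℕ) : ℝ))
        = (x ^ (a+3) * (((a:ℝ)+3) - x) ^ j - ((a:ℝ)+2) * (x ^ (a+2) * (((a:ℝ)+3) - x) ^ j))
          * (((b:ℝ)+2) ^ (b+2-j) * (((b+2).choose j : ℕ) : ℝ)) := by
      intro x; ring
    simp only [hfe]
    rw [intervalIntegral.integral_mul_const,
      intervalIntegral.integral_sub
        (by apply Continuous.intervalIntegrable; fun_prop)
        (by apply Continuous.intervalIntegrable; fun_prop),
      intervalIntegral.integral_const_mul, betaInt, betaInt]
    rfl
  rw [Finset.sum_congr rfl hterm]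
  exact sum_TT_neg a b

theorem stmt_6 (k l : ℕ) (hk : 3 ≤ k) (hl : 2 ≤ l) :
    (∫ x in (0:ℝ)..(k:ℝ), ∫ y in (0:ℝ)..((k:ℝ) + l - x),
      (x - ((k:ℝ) - 1)) * x ^ (k - 1) * y ^ (l - 1)) < 0 := by
  obtain ⟨a, rfl⟩ : ∃ a, k = a + 3 := ⟨k - 3, by omega⟩
  obtain ⟨b, rfl⟩ : ∃ b, l = b + 2 := ⟨l - 2, by omega⟩
  have hinner : ∀ (C u : ℝ), (∫ y in (0:ℝ)..u, C * y ^ (b+1))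
      = C * u ^ (b+2) / ((b:ℝ)+2) := by
    intro C u
    rw [intervalIntegral.integral_const_mul, integral_pow]
    rw [show b+1+1 = b+2 from rfl, zero_pow (by omega : b+2 ≠ 0)]
    push_cast
    ring
  simp only [show a+3-1 = a+2 from rfl, show b+2-1 = b+1 from rfl]
  push_cast
  simp only [show ((a:ℝ)+3-1) = ((a:ℝ)+2) by ring]
  simp only [hinner]
  rw [intervalIntegral.integral_div]
  apply div_neg_of_neg_of_pos
  · exact outer_neg a b
  · positivity
end

section
/- For integers k ≥ 3 and l ≥ 2, the identity l·k^{-(k+l+1)}·∫_{x=0}^{k}∫_{y=0}^{k+l-x}(x-(k-1))·x^{k-1}·y^{l-1} dy dx = Σ_{j=0}^{l} C(l,j)·(l^{l-j}/k^{l-j+1})·((k-1)!·j!/(k+j+1)!)·(j·(1-k)+1) holds, where C(l,j) denotes the binomial coefficient. -/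
open intervalIntegral

lemma key_s7 : ∀ (j m : ℕ) (c : ℝ), (∫ x in (0:ℝ)..c, x ^ m * (c - x) ^ j)
    = c ^ (m + j + 1) * (m.factorial * j.factorial) / (m + j + 1).factorial := by
  intro j
  induction j with
  | zero =>
    intro m c
    simp [integral_pow, Nat.factorial_succ]
    have : (m.factorial : ℝ) ≠ 0 := by positivity
    field_simp
  | succ j ih =>
    intro m c
    have hu : ∀ x ∈ Set.uIcc (0:ℝ) c, HasDerivAt (fun x => (c - x) ^ (j+1))
        (-((j+1) * (c - x) ^ j)) x := by
      intro x _
      have := ((hasDerivAt_id x).const_sub c).pow (j+1)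
      simpa [mul_comm, mul_assoc, mul_left_comm, Pi.pow_def] using this
    have hv : ∀ x ∈ Set.uIcc (0:ℝ) c, HasDerivAt (fun x : ℝ => x ^ (m+1) / ((m:ℝ)+1))
        (x ^ m) x := by
      intro x _
      have := (hasDerivAt_pow (m+1) x).div_const ((m:ℝ)+1)
      have hm : ((m:ℝ)+1) ≠ 0 := by positivity
      have e : ((m+1:ℕ):ℝ) * x ^ (m+1-1) / ((m:ℝ)+1) = x ^ m := by
        push_cast; rw [mul_comm, mul_div_assoc, div_self hm, mul_one]
      rw [← e]; exact this
    have h1 : IntervalIntegrable (fun x => -((j+1) * (c - x) ^ j)) MeasureTheory.volume 0 c := by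
      apply Continuous.intervalIntegrable; fun_prop
    have h2 : IntervalIntegrable (fun x : ℝ => x ^ m) MeasureTheory.volume 0 c := by
      apply Continuous.intervalIntegrable; fun_prop
    have ibp := integral_mul_deriv_eq_deriv_mul hu hv h1 h2
    have e0 : (∫ x in (0:ℝ)..c, x ^ m * (c - x) ^ (j+1))
        = ∫ x in (0:ℝ)..c, (c - x) ^ (j+1) * x ^ m := by
      congr 1; ext x; ring
    rw [e0, ibp]
    simp only [sub_self, zero_pow (Nat.succ_ne_zero j), zero_pow (Nat.succ_ne_zero m),
      zero_mul, mul_zero, zero_div, sub_zero, zero_sub]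
    have e2 : (∫ x in (0:ℝ)..c, -((j+1) * (c - x) ^ j) * (x ^ (m+1) / (m+1)))
        = (-(((j:ℝ)+1)/((m:ℝ)+1))) * ∫ x in (0:ℝ)..c, x ^ (m+1) * (c - x) ^ j := by
      rw [← integral_const_mul]
      congr 1; ext x; ring
    rw [e2, ih (m+1) c]
    have e1 : m + 1 + j + 1 = m + (j + 1) + 1 := by omega
    rw [e1, Nat.factorial_succ m, Nat.factorial_succ j]
    have hm : ((m:ℝ)+1) ≠ 0 := by positivity
    have hf : (((m + (j+1) + 1).factorial : ℕ) : ℝ) ≠ 0 := by positivity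
    push_cast
    field_simp

theorem stmt_7 (k l : ℕ) (hk : 3 ≤ k) (hl : 2 ≤ l) :
    (l:ℝ) * ((k:ℝ) ^ (k + l + 1))⁻¹ *
      ∫ x in (0:ℝ)..(k:ℝ), ∫ y in (0:ℝ)..((k:ℝ) + l - x),
        (x - ((k:ℝ) - 1)) * x ^ (k - 1) * y ^ (l - 1)
    = ∑ j ∈ Finset.range (l + 1),
        (l.choose j : ℝ) * ((l:ℝ) ^ (l - j) / (k:ℝ) ^ (l - j + 1)) *
          (((k - 1).factorial : ℝ) * (j.factorial : ℝ) / ((k + j + 1).factorial : ℝ)) *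
          ((j:ℝ) * (1 - (k:ℝ)) + 1) := by
  have hk0 : (k:ℝ) ≠ 0 := by positivity
  have hl0 : (l:ℝ) ≠ 0 := by positivity
  have hl1 : l - 1 + 1 = l := by omega
  have hlc : ((l - 1 : ℕ):ℝ) + 1 = (l:ℝ) := by
    rw [Nat.cast_sub (by omega)]; ring
  have inner : ∀ x : ℝ, (∫ y in (0:ℝ)..((k:ℝ)+l-x), (x - ((k:ℝ)-1)) * x^(k-1) * y^(l-1))
      = (x - ((k:ℝ)-1)) * x^(k-1) * ((k:ℝ)+l-x)^l / l := by
    intro x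
    rw [intervalIntegral.integral_const_mul, integral_pow, hl1, hlc]
    rw [zero_pow (by omega : l ≠ 0), sub_zero]
    ring
  simp only [inner]
  rw [intervalIntegral.integral_div, mul_comm ((l:ℝ)) _, mul_assoc,
    mul_div_cancel₀ _ hl0]
  -- expand (k+l-x)^l
  have expand : ∀ x : ℝ, (x - ((k:ℝ)-1)) * x^(k-1) * ((k:ℝ)+l-x)^l
      = ∑ j ∈ Finset.range (l+1),
          (((k:ℝ)-x)^j * (l:ℝ)^(l-j) * (l.choose j : ℝ)) * ((x - ((k:ℝ)-1)) * x^(k-1)) := by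
    intro x
    rw [show (k:ℝ)+l-x = ((k:ℝ)-x)+(l:ℝ) by ring, add_pow, Finset.mul_sum]
    exact Finset.sum_congr rfl fun i _ => by ring
  simp only [expand]
  rw [intervalIntegral.integral_finset_sum (fun j _ => by
    apply Continuous.intervalIntegrable; fun_prop)]
  rw [Finset.mul_sum]
  refine Finset.sum_congr rfl (fun j hj => ?_)
  have hjl : j ≤ l := by simpa [Nat.lt_succ_iff] using (Finset.mem_range.mp hj)
  -- compute the term integral
  have split : ∀ x : ℝ, (((k:ℝ)-x)^j * (l:ℝ)^(l-j) * (l.choose j : ℝ)) * ((x - ((k:ℝ)-1)) * x^(k-1))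
      = ((l:ℝ)^(l-j) * (l.choose j : ℝ)) * (x^k * ((k:ℝ)-x)^j)
        - ((l:ℝ)^(l-j) * (l.choose j : ℝ) * ((k:ℝ)-1)) * (x^(k-1) * ((k:ℝ)-x)^j) := by
    intro x
    rw [show x^k = x * x^(k-1) by rw [← pow_succ']; congr 1; omega]
    ring
  simp only [split]
  rw [intervalIntegral.integral_sub (by apply Continuous.intervalIntegrable; fun_prop)
      (by apply Continuous.intervalIntegrable; fun_prop),
    intervalIntegral.integral_const_mul, intervalIntegral.integral_const_mul,
    key_s7 j k (k:ℝ), key_s7 j (k-1) (k:ℝ)]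
  have ek : k - 1 + j + 1 = k + j := by omega
  rw [ek]
  have ekf : (k.factorial : ℝ) = (k:ℝ) * ((k-1).factorial : ℝ) := by
    rw [← Nat.mul_factorial_pred (by omega : k ≠ 0)]
    push_cast
    ring
  have ekj : ((k+j+1).factorial : ℝ) = ((k:ℝ)+j+1) * ((k+j).factorial : ℝ) := by
    rw [Nat.factorial_succ]; push_cast; ring
  have epow1 : (k:ℝ)^(k+j+1) = (k:ℝ)^(k+j) * (k:ℝ) := by rw [pow_succ]
  have epow2 : (k:ℝ)^(k+l+1) = (k:ℝ)^(k+j) * (k:ℝ)^(l-j+1) := by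
    rw [← pow_add]; congr 1; omega
  rw [ekf, ekj, epow1, epow2]
  have h1 : ((k+j).factorial : ℝ) ≠ 0 := by positivity
  have h2 : ((k:ℝ)+j+1) ≠ 0 := by positivity
  have h3 : ((k:ℝ))^(k+j) ≠ 0 := by positivity
  have h4 : ((k:ℝ))^(l-j+1) ≠ 0 := by positivity
  field_simp
  ring
end

section
/- For every integer l ≥ 2, the double integral J(l) = ∫_{x=0}^{2} ∫_{y=0}^{2+l-x} x·(y-(l-1))·y^{l-1} dy dx is strictly positive. -/
theorem stmt_10 (l : ℕ) (hl : 2 ≤ l) :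
    0 < ∫ x in (0:ℝ)..2, ∫ y in (0:ℝ)..(2 + (l:ℝ) - x),
      x * (y - ((l:ℝ) - 1)) * y ^ (l - 1) := by
  have hl1 : (1:ℝ) ≤ (l:ℝ) := by exact_mod_cast (show 1 ≤ l by omega)
  have hn : l - 1 + 1 = l := by omega
  have hlpos : (0:ℝ) < l := by positivity
  have key : ∀ x c : ℝ, (∫ y in (0:ℝ)..c, x * (y - ((l:ℝ) - 1)) * y ^ (l - 1))
      = x * c ^ (l + 1) / ((l:ℝ) + 1) - x * ((l:ℝ) - 1) * c ^ l / l := by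
    intro x c
    have h1 : ∀ y : ℝ, x * (y - ((l:ℝ) - 1)) * y ^ (l - 1)
        = x * y ^ l - x * ((l:ℝ) - 1) * y ^ (l - 1) := by
      intro y
      have hy : y ^ l = y ^ (l - 1) * y := by rw [← pow_succ, hn]
      rw [hy]; ring
    simp_rw [h1]
    rw [intervalIntegral.integral_sub (f := fun y => x * y ^ l)
        (g := fun y => x * ((l:ℝ) - 1) * y ^ (l - 1))
        ((continuous_const.mul (continuous_pow l)).intervalIntegrable _ _)
        ((continuous_const.mul (continuous_pow (l-1))).intervalIntegrable _ _),
      intervalIntegral.integral_const_mul, intervalIntegral.integral_const_mul,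
      integral_pow, integral_pow]
    have h2 : ((l - 1 : ℕ) : ℝ) + 1 = (l : ℝ) := by
      rw [Nat.cast_sub (by omega : 1 ≤ l)]
      push_cast; ring
    rw [hn, h2, zero_pow (by omega : l + 1 ≠ 0), zero_pow (by omega : l ≠ 0)]
    ring
  rw [intervalIntegral.integral_congr (fun x _ => key x (2 + (l:ℝ) - x))]
  apply intervalIntegral.intervalIntegral_pos_of_pos_on
  · apply Continuous.intervalIntegrable
    fun_prop
  · intro x hx
    obtain ⟨hx0, hx2⟩ := hx
    have hc : (0:ℝ) < 2 + (l:ℝ) - x := by linarith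
    have heq : x * (2 + (l:ℝ) - x) ^ (l + 1) / ((l:ℝ) + 1)
        - x * ((l:ℝ) - 1) * (2 + (l:ℝ) - x) ^ l / l
        = x * (2 + (l:ℝ) - x) ^ l * ((l:ℝ) * (2 - x) + 1) / ((l:ℝ) * ((l:ℝ) + 1)) := by
      rw [pow_succ]
      field_simp
      ring
    rw [heq]
    have h3 : (0:ℝ) < (l:ℝ) * (2 - x) + 1 := by nlinarith
    positivity
  · norm_num
end

section
/- For every integer n ≥ 5, the ratio (n-3)·((n-2)^{n-1} - (n-3)^{n-1}) / ((n-1)·((n-2)^{n-2} - (n-3)^{n-2})) is strictly greater than n-4. -/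
theorem stmt_17 (n : ℕ) (hn : 5 ≤ n) :
    (n:ℝ) - 4 <
      ((n:ℝ) - 3) * (((n:ℝ) - 2) ^ (n - 1) - ((n:ℝ) - 3) ^ (n - 1))
        / (((n:ℝ) - 1) * (((n:ℝ) - 2) ^ (n - 2) - ((n:ℝ) - 3) ^ (n - 2))) := by
  have hx : (5:ℝ) ≤ (n:ℝ) := by exact_mod_cast hn
  have h1 : n - 1 = (n - 2) + 1 := by omega
  rw [h1, pow_succ, pow_succ]
  set P := ((n:ℝ) - 2) ^ (n - 2) with hPdef
  set Q := ((n:ℝ) - 3) ^ (n - 2) with hQdef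
  have hQ : 0 < Q := pow_pos (by linarith) _
  have hPQ : Q < P := by
    apply pow_lt_pow_left₀ (by linarith) (by linarith)
    omega
  have hB : 0 < ((n:ℝ) - 1) * (P - Q) := by
    apply mul_pos (by linarith) (by linarith)
  rw [lt_div_iff₀ hB]
  have h5 : 0 ≤ ((n:ℝ) - 5) * Q := mul_nonneg (by linarith) hQ.le
  nlinarith [hPQ, hQ, h5]
end
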